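/- Let A be a real I × J matrix, b ∈ ℝ^I, and q ∈ ℝ^J. Let P_Ω be the nearest-point projection of ℝ^J onto the box Ω = [0,1]^J, and define f(λ) = ½‖q − Aᵀλ − P_Ω(q − Aᵀλ)‖² − ½‖q − Aᵀλ‖² − ⟨λ, b⟩ + ½‖q‖² for λ ∈ ℝ^I. Then weak duality holds: for every λ ∈ ℝ^I and every x ∈ [0,1]^J with Ax = b, f(λ) ≤ ½‖x − q‖². -/

import Mathlib

open scoped RealInnerProductSpace

/-- weak duality: for the dual objective
`f(λ) = ½‖q − Aᵀλ − P_Ω(q − Aᵀλ)‖² − ½‖q − Aᵀλ‖² − ⟨λ, b⟩ + ½‖q‖²` of the projection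
problem `min {½‖x − q‖² : Ax = b, x ∈ [0,1]^J}`, we have `f(λ) ≤ ½‖x − q‖²` for every
`λ ∈ ℝ^I` and every feasible `x` (i.e. `x ∈ [0,1]^J` with `Ax = b`). Here `P_Ω` is the
nearest-point projection onto the unit box and `At λ = Aᵀλ`. -/
theorem weak_duality_box_projection
    (I J : ℕ)
    (A : Matrix (Fin I) (Fin J) ℝ)
    (b : EuclideanSpace ℝ (Fin I))
    (q : EuclideanSpace ℝ (Fin J))
    (P : EuclideanSpace ℝ (Fin J) → EuclideanSpace ℝ (Fin J))
    (hP : ∀ x : EuclideanSpace ℝ (Fin J),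
      (∀ j, 0 ≤ P x j ∧ P x j ≤ 1) ∧
      ∀ z : EuclideanSpace ℝ (Fin J), (∀ j, 0 ≤ z j ∧ z j ≤ 1) → ‖x - P x‖ ≤ ‖x - z‖)
    (At : EuclideanSpace ℝ (Fin I) → EuclideanSpace ℝ (Fin J))
    (hAt : ∀ (lam : EuclideanSpace ℝ (Fin I)) (j : Fin J), At lam j = ∑ i, A i j * lam i)
    (f : EuclideanSpace ℝ (Fin I) → ℝ)
    (hf : ∀ lam, f lam = 1 / 2 * ‖q - At lam - P (q - At lam)‖ ^ 2
        - 1 / 2 * ‖q - At lam‖ ^ 2 - ⟪lam, b⟫ + 1 / 2 * ‖q‖ ^ 2) :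
    ∀ (lam : EuclideanSpace ℝ (Fin I)) (x : EuclideanSpace ℝ (Fin J)),
      (∀ j, 0 ≤ x j ∧ x j ≤ 1) → (∀ i, (∑ j, A i j * x j) = b i) →
      f lam ≤ 1 / 2 * ‖x - q‖ ^ 2 := by
  intro lam x hx hAx
  set v := At lam with hv
  have hproj : ‖q - v - P (q - v)‖ ≤ ‖q - v - x‖ := (hP (q - v)).2 x hx
  have hsq : ‖q - v - P (q - v)‖ ^ 2 ≤ ‖q - v - x‖ ^ 2 :=
    pow_le_pow_left₀ (norm_nonneg _) hproj 2
  have hinner : ⟪x, v⟫ = ⟪lam, b⟫ := by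
    simp only [PiLp.inner_apply, RCLike.inner_apply, starRingEnd_apply, star_trivial, hv, hAt]
    calc ∑ j, (∑ i, A i j * lam i) * x j
        = ∑ j, x j * ∑ i, A i j * lam i := Finset.sum_congr rfl fun j _ => mul_comm _ _
      _ = ∑ j, ∑ i, x j * (A i j * lam i) := by simp [Finset.mul_sum]
      _ = ∑ i, ∑ j, x j * (A i j * lam i) := Finset.sum_comm
      _ = ∑ i, lam i * ∑ j, A i j * x j := by
          refine Finset.sum_congr rfl fun i _ => ?_
          rw [Finset.mul_sum]
          exact Finset.sum_congr rfl fun j _ => by ring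
      _ = ∑ i, lam i * b i := by
          refine Finset.sum_congr rfl fun i _ => by rw [hAx i]
      _ = ∑ i, b i * lam i := Finset.sum_congr rfl fun i _ => mul_comm _ _
  have hne : q - v - x = -((x - q) + v) := by abel
  have e1 : ‖(x - q) + v‖ ^ 2 = ‖x - q‖ ^ 2 + 2 * ⟪x - q, v⟫ + ‖v‖ ^ 2 :=
    norm_add_sq_real _ _
  have e2 : ‖q - v‖ ^ 2 = ‖q‖ ^ 2 - 2 * ⟪q, v⟫ + ‖v‖ ^ 2 := norm_sub_sq_real _ _
  have e3 : ⟪x - q, v⟫ = ⟪x, v⟫ - ⟪q, v⟫ := inner_sub_left _ _ _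
  have e4 : ‖q - v - x‖ ^ 2 = ‖(x - q) + v‖ ^ 2 := by rw [hne, norm_neg]
  rw [hf]
  linarith
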